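/- Conditioned Galton–Watson progeny representation: under the law of a Galton–Watson forest with offspring distribution μ, k trees, conditioned to have total size n (assuming this event has positive probability), the sequence of numbers of children of the n individuals listed in a uniformly random order is distributed as n i.i.d. random variables with law μ conditioned on their sum equal to n − k. -/

import Mathlib

open scoped ENNReal

/-- Finite planar rooted trees. -/
inductive PTree : Type
  | node : List PTree → PTree

namespace PTree

/-- Number of vertices of a planar rooted tree. -/
def size : PTree → ℕ
  | node l => 1 + (l.attach.map (fun t => size t.1)).sum
decreasing_by
  have := List.sizeOf_lt_of_mem t.2
  simp only [node.sizeOf_spec] at *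
  omega

/-- Galton–Watson weight of a tree for the offspring law `p`:
the product over all vertices of `p (number of children)`; this is the probability that the
genealogical tree of a single ancestor in a Galton–Watson process with reproduction law `p`
equals the given planar tree. -/
noncomputable def wt (p : PMF ℕ) : PTree → ℝ≥0∞
  | node l => p l.length * (l.attach.map (fun t => wt p t.1)).prod
decreasing_by
  have := List.sizeOf_lt_of_mem t.2
  simp only [node.sizeOf_spec] at *
  omega

/-- Depth-first list of the out-degrees (numbers of children) of the vertices of a tree. -/
def degList : PTree → List ℕ
  | node l => l.length :: (l.attach.map (fun t => degList t.1)).flatten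
decreasing_by
  have := List.sizeOf_lt_of_mem t.2
  simp only [node.sizeOf_spec] at *
  omega

end PTree

/-- Planar forests with `k` rooted trees and `n` vertices in total. -/
def PForest (k n : ℕ) : Type := {f : Fin k → PTree // ∑ i, (f i).size = n}

/-- Galton–Watson weight of a forest of `k` trees: the probability that a Galton–Watson
process with offspring law `p` started from `k` ancestors has this genealogical forest. -/
noncomputable def forestWt (p : PMF ℕ) {k n : ℕ} (f : PForest k n) : ℝ≥0∞ :=
  ∏ i, (f.1 i).wt p

/-- Depth-first list of out-degrees of a forest (trees listed from left to right). -/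
def forestDegList {k n : ℕ} (f : PForest k n) : List ℕ :=
  (List.ofFn fun i => (f.1 i).degList).flatten

open Classical


-- ===== auxiliary development =====

def Ballot (k : ℕ) (l : List ℕ) : Prop :=
  l.sum + k = l.length ∧ ∀ j < l.length, j < (l.take j).sum + k

theorem ballot_cons (m : ℕ) (rest : List ℕ) (h : Ballot m rest) : Ballot 1 (m :: rest) := by
  obtain ⟨hs, hp⟩ := h
  refine ⟨by simp; omega, ?_⟩
  intro j hj
  cases j with
  | zero => simp
  | succ i =>
    simp only [List.take_succ_cons, List.sum_cons]
    simp only [List.length_cons] at hj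
    have := hp i (by omega)
    omega

theorem ballot_append (k : ℕ) (l m : List ℕ) (hl : Ballot k l) (hm : Ballot 1 m) :
    Ballot (k+1) (m ++ l) := by
  obtain ⟨hs, hp⟩ := hl
  obtain ⟨hs', hp'⟩ := hm
  refine ⟨by simp; omega, ?_⟩
  intro j hj
  simp only [List.length_append] at hj
  rw [List.take_append, List.sum_append]
  rcases lt_or_ge j m.length with h | h
  · have := hp' j h
    have h0 : j - m.length = 0 := by omega
    rw [h0]; simp; omega
  · rw [List.take_of_length_le h]
    have := hp (j - m.length) (by omega)
    omega

theorem ballot_flatten (L : List (List ℕ)) (h : ∀ m ∈ L, Ballot 1 m) :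
    Ballot L.length L.flatten := by
  induction L with
  | nil => exact ⟨rfl, by intro j hj; simp at hj⟩
  | cons a L ih =>
    simp only [List.flatten_cons, List.length_cons]
    exact ballot_append L.length L.flatten a (ih fun m hm => h m (List.mem_cons_of_mem _ hm))
      (h a (List.mem_cons_self))


theorem sum_take_mono (l : List ℕ) (i j : ℕ) (h : i ≤ j) :
    (l.take i).sum ≤ (l.take j).sum := by
  have hj : j = i + (j - i) := by omega
  rw [hj, List.take_add, List.sum_append]
  exact Nat.le_add_right _ _

theorem ballot_zero (l : List ℕ) (h : Ballot 0 l) : l = [] := by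
  obtain ⟨hs, hp⟩ := h
  cases l with
  | nil => rfl
  | cons a l => have := hp 0 (by simp); simp at this

theorem ballot_split : ∀ (k : ℕ) (l : List ℕ), Ballot k l →
    ∃ L : List (List ℕ), L.length = k ∧ (∀ m ∈ L, Ballot 1 m) ∧ L.flatten = l := by
  intro k
  induction k with
  | zero =>
    intro l h
    exact ⟨[], rfl, by simp, by simp [ballot_zero l h]⟩
  | succ k ih =>
    intro l h
    obtain ⟨hs, hp⟩ := h
    have hQ : ∃ j, (l.take j).sum + 1 ≤ j := by
      refine ⟨l.length, ?_⟩
      rw [List.take_of_length_le le_rfl]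
      omega
    classical
    set T := Nat.find hQ with hT
    have hTspec : (l.take T).sum + 1 ≤ T := Nat.find_spec hQ
    have hTmin : ∀ j < T, j < (l.take j).sum + 1 := by
      intro j hj
      have := Nat.find_min hQ hj
      omega
    have hT1 : 1 ≤ T := by
      by_contra hc
      have : T = 0 := by omega
      rw [this] at hTspec
      simp at hTspec
    have hTlen : T ≤ l.length := by
      by_contra hc
      push_neg at hc
      have := hTmin l.length hc
      rw [List.take_of_length_le le_rfl] at this
      omega
    have hTeq : (l.take T).sum + 1 = T := by
      have h1 : T - 1 < (l.take (T-1)).sum + 1 := hTmin (T-1) (by omega)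
      have h2 := sum_take_mono l (T-1) T (by omega)
      omega
    have hlen_take : (l.take T).length = T := by
      rw [List.length_take]; omega
    have hball_take : Ballot 1 (l.take T) := by
      refine ⟨by omega, ?_⟩
      intro j hj
      rw [hlen_take] at hj
      rw [List.take_take]
      have : min j T = j := by omega
      rw [this]
      exact hTmin j hj
    have hsum_split : (l.take T).sum + (l.drop T).sum = l.sum := by
      conv_rhs => rw [← List.take_append_drop T l]
      rw [List.sum_append]
    have hlen_drop : (l.drop T).length = l.length - T := by
      rw [List.length_drop]
    have hball_drop : Ballot k (l.drop T) := by
      refine ⟨by omega, ?_⟩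
      intro j hj
      rw [hlen_drop] at hj
      have hkey := hp (T + j) (by omega)
      have htj : l.take (T + j) = l.take T ++ (l.drop T).take j := List.take_add ..
      rw [htj, List.sum_append] at hkey
      omega
    obtain ⟨L, hL1, hL2, hL3⟩ := ih (l.drop T) hball_drop
    refine ⟨l.take T :: L, by simp [hL1], ?_, ?_⟩
    · intro m hm
      rcases List.mem_cons.1 hm with rfl | hm
      · exact hball_take
      · exact hL2 m hm
    · simp [hL3]


namespace PTree

theorem strongInd (P : PTree → Prop)
    (h : ∀ l, (∀ t ∈ l, P t) → P (.node l)) : ∀ t, P t := by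
  have key : ∀ N t, sizeOf t ≤ N → P t := by
    intro N
    induction N with
    | zero =>
      intro t ht
      cases t with
      | node l => simp only [node.sizeOf_spec] at ht; omega
    | succ N ih =>
      intro t ht
      cases t with
      | node l =>
        refine h l fun t' ht' => ih t' ?_
        have := List.sizeOf_lt_of_mem ht'
        simp only [node.sizeOf_spec] at ht
        omega
  exact fun t => key (sizeOf t) t le_rfl

theorem degList_node (l : List PTree) :
    degList (node l) = l.length :: (l.map degList).flatten := by
  rw [degList]
  congr 1
  congr 1
  simp

theorem size_node (l : List PTree) :
    size (node l) = 1 + (l.map size).sum := by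
  rw [size]
  congr 2
  simp

theorem wt_node (p : PMF ℕ) (l : List PTree) :
    wt p (node l) = p l.length * (l.map (wt p)).prod := by
  rw [wt]
  congr 2
  simp

theorem degList_length : ∀ t : PTree, (degList t).length = size t := by
  refine strongInd _ fun l ih => ?_
  rw [degList_node, size_node, List.length_cons, List.length_flatten, List.map_map]
  have : (l.map (List.length ∘ degList)) = l.map size := List.map_congr_left fun t ht => ih t ht
  rw [this]
  omega

theorem ballot_degList : ∀ t : PTree, Ballot 1 (degList t) := by
  refine strongInd _ fun l ih => ?_
  rw [degList_node]
  refine ballot_cons _ _ ?_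
  have := ballot_flatten (l.map degList) ?_
  · rwa [List.length_map] at this
  · intro m hm
    obtain ⟨t, ht, rfl⟩ := List.mem_map.1 hm
    exact ih t ht

/-- unique prefix decoding -/
theorem degList_prefix : ∀ t t' : PTree, ∀ r r' : List ℕ,
    degList t ++ r = degList t' ++ r' → t = t' ∧ r = r' := by
  refine strongInd (fun t => ∀ t' r r', degList t ++ r = degList t' ++ r' → t = t' ∧ r = r')
    fun l ih => ?_
  have inner : ∀ L : List PTree,
      (∀ t ∈ L, ∀ t' r r', degList t ++ r = degList t' ++ r' → t = t' ∧ r = r') →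
      ∀ (L' : List PTree) (r r' : List ℕ), L.length = L'.length →
      (L.map degList).flatten ++ r = (L'.map degList).flatten ++ r' → L = L' ∧ r = r' := by
    intro L
    induction L with
    | nil =>
      intro _ L' r r' hlen heq
      cases L' with
      | nil => simp_all
      | cons a L' => simp at hlen
    | cons a L ihL =>
      intro hmem L' r r' hlen heq
      cases L' with
      | nil => simp at hlen
      | cons a' L' =>
        simp only [List.map_cons, List.flatten_cons, List.append_assoc] at heq
        obtain ⟨rfl, heq2⟩ := hmem a (List.mem_cons_self) a' _ _ heq
        obtain ⟨rfl, hr⟩ := ihL (fun t ht => hmem t (List.mem_cons_of_mem _ ht)) L' r r'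
          (by simpa using hlen) heq2
        exact ⟨rfl, hr⟩
  intro t' r r' heq
  cases t' with
  | node l' =>
    rw [degList_node, degList_node] at heq
    simp only [List.cons_append, List.cons.injEq] at heq
    obtain ⟨hlen, heq2⟩ := heq
    obtain ⟨rfl, hr⟩ := inner l ih l' r r' hlen heq2
    exact ⟨rfl, hr⟩

theorem degList_injective : Function.Injective degList := by
  intro t t' h
  exact (degList_prefix t t' [] [] (by simp [h])).1

theorem flatten_mem_length_le (L : List (List ℕ)) (m : List ℕ) (hm : m ∈ L) :
    m.length ≤ L.flatten.length := by
  induction L with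
  | nil => simp at hm
  | cons a L ih =>
    rcases List.mem_cons.1 hm with rfl | hm
    · simp
    · simp only [List.flatten_cons, List.length_append]
      have := ih hm
      omega

theorem exists_tree : ∀ (N : ℕ) (l : List ℕ), l.length ≤ N → Ballot 1 l →
    ∃ t : PTree, degList t = l := by
  intro N
  induction N with
  | zero =>
    intro l hl hb
    obtain ⟨hs, _⟩ := hb
    interval_cases hlen : l.length
    · omega
  | succ N ih =>
    intro l hl hb
    obtain ⟨hs, hp⟩ := hb
    cases l with
    | nil => simp at hs
    | cons m rest =>
      simp only [List.sum_cons, List.length_cons] at hs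
      have hrest : Ballot m rest := by
        refine ⟨by omega, ?_⟩
        intro j hj
        have := hp (j+1) (by simp; omega)
        simp only [List.take_succ_cons, List.sum_cons] at this
        omega
      obtain ⟨L, hL1, hL2, hL3⟩ := ballot_split m rest hrest
      have build : ∀ L' : List (List ℕ), (∀ m' ∈ L', m' ∈ L) →
          ∃ ts : List PTree, ts.map degList = L' := by
        intro L'
        induction L' with
        | nil => intro _; exact ⟨[], rfl⟩
        | cons a L' ihL =>
          intro hmem
          have ha : a ∈ L := hmem a (List.mem_cons_self)
          have halen : a.length ≤ N := by
            have h1 := flatten_mem_length_le L a ha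
            rw [hL3] at h1
            simp only [List.length_cons] at hl
            omega
          obtain ⟨t, ht⟩ := ih a halen (hL2 a ha)
          obtain ⟨ts, hts⟩ := ihL (fun m' hm' => hmem m' (List.mem_cons_of_mem _ hm'))
          exact ⟨t :: ts, by simp [ht, hts]⟩
      obtain ⟨ts, hts⟩ := build L (fun _ h => h)
      refine ⟨node ts, ?_⟩
      rw [degList_node, hts, hL3]
      congr 1
      have hlen2 : ts.length = L.length := by rw [← hts, List.length_map]
      omega

end PTree

theorem sum_take_getD (l : List ℕ) (t : ℕ) (ht : t ≤ l.length) :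
    (l.take t).sum = ∑ i ∈ Finset.range t, l.getD i 0 := by
  induction t with
  | zero => simp
  | succ t ih =>
    rw [List.sum_take_succ l t (by omega), Finset.sum_range_succ, ih (by omega),
      List.getD_eq_getElem l 0 (by omega)]

theorem ballot_ofFn_iff (n k : ℕ) (hn : 0 < n) (g : Fin n → ℕ) :
    Ballot k (List.ofFn g) ↔
      ((∑ i, g i) + k = n ∧
        ∀ t < n, (t : ℤ) < (∑ i ∈ Finset.range t, (g ⟨i % n, Nat.mod_lt i hn⟩ : ℤ)) + k) := by
  have hlen : (List.ofFn g).length = n := List.length_ofFn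
  have hsum : (List.ofFn g).sum = ∑ i, g i := List.sum_ofFn
  have hgetD : ∀ i < n, (List.ofFn g).getD i 0 = g ⟨i % n, Nat.mod_lt i hn⟩ := by
    intro i hi
    rw [List.getD_eq_getElem _ 0 (by omega), List.getElem_ofFn]
    congr 1
    exact Fin.ext (by simp [Nat.mod_eq_of_lt hi])
  constructor
  · rintro ⟨h1, h2⟩
    rw [hlen] at h2
    refine ⟨by rw [← hsum, h1, hlen], ?_⟩
    intro t ht
    have := h2 t ht
    rw [sum_take_getD _ t (by omega)] at this
    have hc : ((∑ i ∈ Finset.range t, (List.ofFn g).getD i 0 : ℕ) : ℤ)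
        = ∑ i ∈ Finset.range t, (g ⟨i % n, Nat.mod_lt i hn⟩ : ℤ) := by
      push_cast
      exact Finset.sum_congr rfl fun i hi => by
        rw [hgetD i (by simp at hi; omega)]
    omega
  · rintro ⟨h1, h2⟩
    refine ⟨by rw [hsum, hlen]; omega, ?_⟩
    intro t ht
    rw [hlen] at ht
    have := h2 t ht
    rw [sum_take_getD _ t (by omega)]
    have hc : ((∑ i ∈ Finset.range t, (List.ofFn g).getD i 0 : ℕ) : ℤ)
        = ∑ i ∈ Finset.range t, (g ⟨i % n, Nat.mod_lt i hn⟩ : ℤ) := by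
      push_cast
      exact Finset.sum_congr rfl fun i hi => by
        rw [hgetD i (by simp at hi; omega)]
    omega

theorem cycle_count (n k : ℕ) (hn : 0 < n) (hk : 1 ≤ k) (hkn : k ≤ n) (y : Fin n → ℕ)
    (hs : ∑ i, y i = n - k) :
    (Finset.univ.filter fun c : Fin n =>
      Ballot k (List.ofFn fun i => y (i + c))).card = k := by
  haveI : NeZero n := ⟨by omega⟩
  set d : ℕ → ℤ := fun j => (y ⟨j % n, Nat.mod_lt j hn⟩ : ℤ) with hd
  set f : ℕ → ℤ := fun j => (∑ i ∈ Finset.range j, d i) - j with hf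
  have hd0 : ∀ j, 0 ≤ d j := fun j => by positivity
  have hper : ∀ j, d (j + n) = d j := by
    intro j; simp only [hd, Nat.add_mod_right]
  have hstep : ∀ j, f (j + 1) = f j + d j - 1 := by
    intro j
    simp only [hf, Finset.sum_range_succ]
    push_cast
    ring
  have hdown : ∀ j, f j - 1 ≤ f (j + 1) := by
    intro j; rw [hstep j]; have := hd0 j; linarith
  have hsum_n : ∑ i ∈ Finset.range n, d i = (n : ℤ) - k := by
    rw [Finset.sum_range fun i => d i]
    have h1 : ∀ i : Fin n, d i.val = (y i : ℤ) := by
      intro i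
      simp only [hd]
      congr 1
      exact congrArg y (Fin.ext (Nat.mod_eq_of_lt i.isLt))
    rw [Finset.sum_congr rfl fun i _ => h1 i, ← Nat.cast_sum, hs]
    push_cast [hkn]
    ring
  have hwindow : ∀ j, ∑ i ∈ Finset.Ico j (j + n), d i = (n : ℤ) - k := by
    intro j
    induction j with
    | zero => rw [← Finset.range_eq_Ico] at *; simpa using hsum_n
    | succ j ih =>
      have h1 : ∑ i ∈ Finset.Ico j (j + n), d i
          = d j + ∑ i ∈ Finset.Ico (j+1) (j + n), d i :=
        Finset.sum_eq_sum_Ico_succ_bot (by omega) d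
      have h2 : ∑ i ∈ Finset.Ico (j+1) (j + n + 1), d i
          = (∑ i ∈ Finset.Ico (j+1) (j + n), d i) + d (j + n) :=
        Finset.sum_Ico_succ_top (by omega) d
      have h3 : j + 1 + n = j + n + 1 := by omega
      rw [h3, h2, hper j]
      linarith
  have hshift : ∀ j, f (j + n) = f j - k := by
    intro j
    have h1 : ∑ i ∈ Finset.Ico j (j + n), d i
        = (∑ i ∈ Finset.range (j+n), d i) - ∑ i ∈ Finset.range j, d i :=
      Finset.sum_Ico_eq_sub d (by omega)
    have h2 := hwindow j
    rw [h1] at h2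
    simp only [hf]
    push_cast
    linarith
  have hf0 : f 0 = 0 := by simp [hf]
  -- validity of rotation c ↔ strict record at c + n
  have hvalid_iff : ∀ c : Fin n,
      (Ballot k (List.ofFn fun i => y (i + c)) ↔ ∀ i < c.val + n, f (c.val + n) < f i) := by
    intro c
    rw [ballot_ofFn_iff n k hn]
    have hsumrot : (∑ i, y (i + c)) = ∑ i, y i := Equiv.sum_comp (Equiv.addRight c) y
    have hsumc : (∑ i, y (i + c)) + k = n := by rw [hsumrot, hs]; omega
    have hterm : ∀ i, (y (⟨i % n, Nat.mod_lt i hn⟩ + c) : ℤ) = d (c.val + i) := by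
      intro i
      simp only [hd]
      congr 2
      apply Fin.ext
      simp only [Fin.add_def]
      rw [Nat.mod_add_mod, Nat.add_comm]
    have hpartial : ∀ t, (∑ i ∈ Finset.range t, (y (⟨i % n, Nat.mod_lt i hn⟩ + c) : ℤ))
        = f (c.val + t) - f c.val + t := by
      intro t
      have e1 : (∑ i ∈ Finset.range t, (y (⟨i % n, Nat.mod_lt i hn⟩ + c) : ℤ))
          = ∑ i ∈ Finset.range t, d (c.val + i) :=
        Finset.sum_congr rfl fun i _ => hterm i
      have e2 : ∑ i ∈ Finset.Ico c.val (c.val + t), d i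
          = ∑ i ∈ Finset.range (c.val + t - c.val), d (c.val + i) :=
        Finset.sum_Ico_eq_sum_range d c.val (c.val + t)
      have e3 : ∑ i ∈ Finset.Ico c.val (c.val + t), d i
          = (∑ i ∈ Finset.range (c.val + t), d i) - ∑ i ∈ Finset.range c.val, d i :=
        Finset.sum_Ico_eq_sub d (by omega)
      have e4 : c.val + t - c.val = t := by omega
      rw [e4] at e2
      rw [e3] at e2
      rw [e1, ← e2]
      simp only [hf]
      push_cast
      ring
    constructor
    · rintro ⟨-, h2⟩ i hi
      have key : ∀ t < n, f (c.val + n) < f (c.val + t) := by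
        intro t ht
        have := h2 t ht
        rw [hpartial t] at this
        have hcn := hshift c.val
        linarith
      rcases le_or_gt c.val i with hci | hci
      · have h5 := key (i - c.val) (by omega)
        have h6 : c.val + (i - c.val) = i := by omega
        rwa [h6] at h5
      · have h5 := key (i + n - c.val) (by omega)
        have h6 : c.val + (i + n - c.val) = i + n := by omega
        rw [h6, hshift i] at h5
        have hk' : (1:ℤ) ≤ k := by exact_mod_cast hk
        linarith
    · intro h
      refine ⟨hsumc, ?_⟩
      intro t ht
      rw [hpartial t]
      have h5 := h (c.val + t) (by omega)
      have hcn := hshift c.val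
      linarith
  -- record counting
  set Rec : ℕ → Prop := fun j => ∀ i < j, f j < f i with hRec
  set m : ℕ → ℤ := fun j => (Finset.range (j+1)).inf' Finset.nonempty_range_add_one f with hm
  have hm_le : ∀ i j, i ≤ j → m j ≤ f i := by
    intro i j hij
    exact Finset.inf'_le f (Finset.mem_range.2 (by omega))
  have hm0 : m 0 = 0 := by
    apply le_antisymm
    · have h0 := hm_le 0 0 le_rfl
      rw [hf0] at h0
      exact h0
    · apply Finset.le_inf'
      intro i hi
      rw [Finset.mem_range] at hi
      have : i = 0 := by omega
      rw [this, hf0]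
  have hm_lem : ∀ j, m (j+1) ≤ m j := by
    intro j
    apply Finset.le_inf'
    intro i hi
    rw [Finset.mem_range] at hi
    exact hm_le i (j+1) (by omega)
  have hmsucc : ∀ j, m (j+1) = min (f (j+1)) (m j) := by
    intro j
    apply le_antisymm
    · exact le_min (hm_le (j+1) (j+1) le_rfl) (hm_lem j)
    · apply Finset.le_inf'
      intro i hi
      rw [Finset.mem_range] at hi
      rcases Nat.lt_or_ge i (j+1) with h | h
      · exact le_trans (min_le_right _ _) (hm_le i j (by omega))
      · have : i = j + 1 := by omega
        rw [this]
        exact min_le_left _ _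
  set r : ℕ → ℕ := fun j => ((Finset.Icc 1 j).filter Rec).card with hr
  have hrm : ∀ j, (r j : ℤ) = - m j := by
    intro j
    induction j with
    | zero =>
      simp only [hr, hm0]
      rw [show Finset.Icc 1 0 = ∅ by rfl]
      simp
    | succ j ih =>
      have hicc : Finset.Icc 1 (j+1) = insert (j+1) (Finset.Icc 1 j) := by
        ext i
        simp only [Finset.mem_Icc, Finset.mem_insert]
        omega
      have hnotmem : j + 1 ∉ Finset.Icc 1 j := by simp
      by_cases hR : Rec (j+1)
      · have hlt : f (j+1) < m j := by
          refine (Finset.lt_inf'_iff Finset.nonempty_range_add_one).2 ?_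
          intro i hi
          exact hR i (by simp at hi; omega)
        have hge : m j - 1 ≤ f (j+1) := le_trans (by linarith [hm_le j j le_rfl]) (hdown j)
        have hfeq : f (j+1) = m j - 1 := by linarith
        have hcard : r (j+1) = r j + 1 := by
          simp only [hr, hicc, Finset.filter_insert, if_pos hR]
          rw [Finset.card_insert_of_notMem (fun hc => hnotmem (Finset.mem_of_mem_filter _ hc))]
        rw [hcard, hmsucc j, hfeq]
        push_cast
        rw [min_eq_left (by linarith)]
        omega
      · obtain ⟨i, hi, hfi⟩ : ∃ i, i < j + 1 ∧ f i ≤ f (j+1) := by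
          by_contra hc
          push_neg at hc
          exact hR fun i hi => hc i hi
        have hmle : m j ≤ f (j+1) := le_trans (hm_le i j (by omega)) hfi
        have hcard : r (j+1) = r j := by
          simp only [hr, hicc, Finset.filter_insert, if_neg hR]
        rw [hcard, hmsucc j, min_eq_right hmle]
        exact ih
  have hm_shift : m (2*n - 1) = m (n - 1) - k := by
    have hrange1 : (n-1) + 1 = n := by omega
    have hrange2 : (2*n-1) + 1 = 2*n := by omega
    apply le_antisymm
    · obtain ⟨i, hi, hieq⟩ := Finset.exists_mem_eq_inf'
        (Finset.nonempty_range_add_one (n := n-1)) f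
      rw [Finset.mem_range] at hi
      have hieq' : m (n-1) = f i := hieq
      have h1 : m (2*n-1) ≤ f (i + n) :=
        Finset.inf'_le f (Finset.mem_range.2 (by omega))
      rw [hshift i] at h1
      rw [hieq']
      exact h1
    · show m (n-1) - k ≤ (Finset.range (2*n-1+1)).inf' Finset.nonempty_range_add_one f
      apply Finset.le_inf'
      intro j hj
      rw [Finset.mem_range] at hj
      rcases lt_or_ge j n with h | h
      · have h1 : m (n-1) ≤ f j := hm_le j (n-1) (by omega)
        have hknn : (0:ℤ) ≤ k := by positivity
        linarith
      · have h2 : j - n + n = j := by omega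
        have h3 := hshift (j - n)
        rw [h2] at h3
        have h1 : m (n-1) ≤ f (j-n) := hm_le (j-n) (n-1) (by omega)
        linarith
  -- count of records in [n, 2n)
  set A : Finset ℕ := (Finset.Icc n (2*n-1)).filter Rec with hA
  have hsplit : Finset.Icc 1 (2*n-1) = Finset.Icc 1 (n-1) ∪ Finset.Icc n (2*n-1) := by
    ext i
    simp only [Finset.mem_Icc, Finset.mem_union]
    omega
  have hdisj : Disjoint (Finset.Icc 1 (n-1)) (Finset.Icc n (2*n-1)) := by
    rw [Finset.disjoint_left]
    intro a ha hb
    simp only [Finset.mem_Icc] at ha hb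
    omega
  have hcards : r (2*n-1) = r (n-1) + A.card := by
    simp only [hr, hA, hsplit, Finset.filter_union]
    exact Finset.card_union_of_disjoint (Finset.disjoint_filter_filter hdisj)
  have hAcard : (A.card : ℤ) = k := by
    have h1 := hrm (2*n-1)
    have h2 := hrm (n-1)
    rw [hcards] at h1
    rw [hm_shift] at h1
    push_cast at h1
    linarith
  -- bijection between valid rotations and records in [n, 2n)
  have hbij : (Finset.univ.filter fun c : Fin n =>
      Ballot k (List.ofFn fun i => y (i + c))).card = A.card := by
    apply Finset.card_bij (fun c _ => c.val + n)
    · intro c hc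
      simp only [Finset.mem_filter, Finset.mem_univ, true_and] at hc
      simp only [hA, Finset.mem_filter, Finset.mem_Icc]
      refine ⟨⟨by omega, by have := c.isLt; omega⟩, ?_⟩
      exact (hvalid_iff c).1 hc
    · intro c1 _ c2 _ h
      exact Fin.ext (by omega)
    · intro b hb
      simp only [hA, Finset.mem_filter, Finset.mem_Icc] at hb
      obtain ⟨⟨hb1, hb2⟩, hb3⟩ := hb
      refine ⟨⟨b - n, by omega⟩, ?_, by simp; omega⟩
      simp only [Finset.mem_filter, Finset.mem_univ, true_and]
      apply (hvalid_iff _).2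
      have : b - n + n = b := by omega
      rw [this]
      exact hb3
  rw [hbij]
  exact_mod_cast hAcard

section Forest
open PTree

theorem wt_eq_prod (p : PMF ℕ) : ∀ t : PTree, wt p t = ((degList t).map p).prod := by
  refine strongInd _ fun l ih => ?_
  rw [wt_node, degList_node, List.map_cons, List.prod_cons, List.map_flatten,
    List.prod_flatten, List.map_map, List.map_map]
  congr 1
  exact congrArg List.prod (List.map_congr_left fun t ht => by simpa using ih t ht)

theorem ofFn_getD (n : ℕ) (l : List ℕ) (h : l.length = n) :
    List.ofFn (fun i : Fin n => l.getD i 0) = l := by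
  apply List.ext_getElem
  · simp [h]
  · intro i h1 h2
    rw [List.getElem_ofFn, List.getD_eq_getElem l 0 h2]

theorem ofFn_get_cast {α : Type*} (k : ℕ) (L : List α) (h : L.length = k) :
    List.ofFn (fun i : Fin k => L.get ⟨i.val, by omega⟩) = L := by
  apply List.ext_getElem
  · simp [h]
  · intro i h1 h2
    rw [List.getElem_ofFn]
    rfl

variable {k n : ℕ}

theorem forestDegList_length (f : PForest k n) : (forestDegList f).length = n := by
  rw [forestDegList, List.length_flatten, List.map_ofFn, List.sum_ofFn]
  have h1 : ∀ i : Fin k, (List.length ∘ fun i => (f.1 i).degList) i = (f.1 i).size :=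
    fun i => degList_length _
  rw [Finset.sum_congr rfl fun i _ => h1 i]
  exact f.2

theorem ballot_forestDegList (f : PForest k n) : Ballot k (forestDegList f) := by
  have h := ballot_flatten (List.ofFn fun i => (f.1 i).degList) ?_
  · rwa [List.length_ofFn] at h
  · intro m hm
    rw [List.mem_ofFn] at hm
    obtain ⟨i, rfl⟩ := hm
    exact ballot_degList _

theorem forestWt_eq (p : PMF ℕ) (f : PForest k n) :
    forestWt p f = ((forestDegList f).map p).prod := by
  rw [forestWt, forestDegList, List.map_flatten, List.prod_flatten, List.map_ofFn,
    List.map_ofFn, List.prod_ofFn]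
  exact Finset.prod_congr rfl fun i _ => by simp [wt_eq_prod p (f.1 i)]

theorem degList_flatten_inj : ∀ (L L' : List PTree), L.length = L'.length →
    (L.map degList).flatten = (L'.map degList).flatten → L = L' := by
  intro L
  induction L with
  | nil =>
    intro L' h1 _
    cases L' with
    | nil => rfl
    | cons a L' => simp at h1
  | cons a L ih =>
    intro L' h1 h2
    cases L' with
    | nil => simp at h1
    | cons a' L' =>
      simp only [List.map_cons, List.flatten_cons] at h2
      obtain ⟨rfl, h3⟩ := degList_prefix a a' _ _ h2
      rw [ih L' (by simpa using h1) h3]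

theorem forestDegList_inj (f f' : PForest k n) (h : forestDegList f = forestDegList f') :
    f = f' := by
  have e1 : (List.ofFn f.1).map PTree.degList = List.ofFn fun i => (f.1 i).degList :=
    List.map_ofFn
  have e1' : (List.ofFn f'.1).map PTree.degList = List.ofFn fun i => (f'.1 i).degList :=
    List.map_ofFn
  have h2 := degList_flatten_inj (List.ofFn f.1) (List.ofFn f'.1) (by simp)
    (by rw [e1, e1']; exact h)
  rw [List.ofFn_inj] at h2
  exact Subtype.ext h2

end Forest

section Forest2
open PTree
variable {k n : ℕ}

theorem exists_trees_of_pieces : ∀ (L : List (List ℕ)), (∀ m ∈ L, Ballot 1 m) →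
    ∃ ts : List PTree, ts.map degList = L := by
  intro L
  induction L with
  | nil => intro _; exact ⟨[], rfl⟩
  | cons a L ih =>
    intro h
    obtain ⟨t, ht⟩ := exists_tree a.length a le_rfl (h a (List.mem_cons_self))
    obtain ⟨ts, hts⟩ := ih fun m hm => h m (List.mem_cons_of_mem _ hm)
    exact ⟨t :: ts, by simp [ht, hts]⟩

theorem forestDegList_surj (l : List ℕ) (hlen : l.length = n) (hb : Ballot k l) :
    ∃ f : PForest k n, forestDegList f = l := by
  obtain ⟨L, hL1, hL2, hL3⟩ := ballot_split k l hb
  obtain ⟨ts, hts⟩ := exists_trees_of_pieces L hL2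
  have htsl : ts.length = k := by rw [← hL1, ← hts, List.length_map]
  have hofn : List.ofFn (fun i : Fin k => ts.get ⟨i.val, by omega⟩) = ts :=
    ofFn_get_cast k ts htsl
  have hdeg : (List.ofFn fun i : Fin k => (ts.get ⟨i.val, by omega⟩).degList) = L := by
    apply List.ext_getElem
    · simp [hL1]
    · intro j h1 h2
      rw [List.getElem_ofFn]
      have h3 : j < (ts.map degList).length := by rw [hts]; exact h2
      have h5 : (ts.map degList)[j]'h3 = degList (ts[j]'(by simpa using h3)) :=
        List.getElem_map _
      exact h5.symm.trans (List.getElem_of_eq hts h3)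
  have hL1' : (L.map List.length).length = k := by simp [hL1]
  have hpiece : ∀ i : Fin k, (ts.get ⟨i.val, by omega⟩).degList
      = L.get ⟨i.val, by omega⟩ := by
    intro i
    have h2 : i.val < (List.ofFn fun j : Fin k => (ts.get ⟨j.val, by omega⟩).degList).length := by
      simp [i.isLt]
    have h3 := List.getElem_of_eq hdeg h2
    rw [List.getElem_ofFn] at h3
    exact h3
  have hsize : ∑ i : Fin k, (ts.get ⟨i.val, by omega⟩).size = n := by
    have e1 : ∀ i : Fin k, (ts.get ⟨i.val, by omega⟩).size
        = (L.map List.length).get ⟨i.val, by omega⟩ := by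
      intro i
      rw [← degList_length, hpiece i]
      simp
    rw [Finset.sum_congr rfl fun i _ => e1 i]
    have e2 : (List.ofFn fun i : Fin k => (L.map List.length).get ⟨i.val, by omega⟩)
        = L.map List.length := ofFn_get_cast k _ hL1'
    calc ∑ i : Fin k, (L.map List.length).get ⟨i.val, by omega⟩
        = (List.ofFn fun i : Fin k => (L.map List.length).get ⟨i.val, by omega⟩).sum := by
          rw [List.sum_ofFn]
      _ = (L.map List.length).sum := by rw [e2]
      _ = n := by rw [← List.length_flatten, hL3, hlen]
  refine ⟨⟨fun i => ts.get ⟨i.val, by omega⟩, hsize⟩, ?_⟩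
  delta forestDegList
  show (List.ofFn fun i : Fin k => (ts.get ⟨i.val, by omega⟩).degList).flatten = l
  rw [hdeg, hL3]

end Forest2


section Glue
variable {k n : ℕ}

def yOf (f : PForest k n) : Fin n → ℕ := fun i => (forestDegList f).getD i 0

theorem ofFn_yOf (f : PForest k n) : List.ofFn (yOf f) = forestDegList f :=
  ofFn_getD n _ (forestDegList_length f)

theorem ballot_yOf (f : PForest k n) : Ballot k (List.ofFn (yOf f)) := by
  rw [ofFn_yOf]; exact ballot_forestDegList f

theorem yOf_inj : Function.Injective (yOf (k := k) (n := n)) := fun f f' h =>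
  forestDegList_inj _ _ (by rw [← ofFn_yOf, ← ofFn_yOf, h])

theorem yOf_surj (y : Fin n → ℕ) (h : Ballot k (List.ofFn y)) :
    ∃ f : PForest k n, yOf f = y := by
  obtain ⟨f, hf⟩ := forestDegList_surj (k := k) (n := n) (List.ofFn y) (List.length_ofFn) h
  refine ⟨f, funext fun i => ?_⟩
  have h1 : (forestDegList f).getD i 0 = (List.ofFn y).getD i 0 := by rw [hf]
  rw [yOf] at *
  rw [h1, List.getD_eq_getElem _ 0 (by simp [i.isLt]), List.getElem_ofFn]

theorem forestWt_eq_prod_yOf (p : PMF ℕ) (f : PForest k n) :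
    forestWt p f = ∏ i, p (yOf f i) := by
  rw [forestWt_eq, ← ofFn_yOf, List.map_ofFn, List.prod_ofFn]
  rfl

theorem ballot_sum (y : Fin n → ℕ) (h : Ballot k (List.ofFn y)) : ∑ i, y i = n - k := by
  obtain ⟨h1, -⟩ := h
  rw [List.sum_ofFn, List.length_ofFn] at h1
  omega

theorem tsum_forest (p : PMF ℕ) (g : Fin n → ℕ) :
    ∑' f : PForest k n, (if yOf f = g then forestWt p f else 0)
      = if Ballot k (List.ofFn g) then ∏ i, p (g i) else 0 := by
  by_cases hg : Ballot k (List.ofFn g)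
  · obtain ⟨f0, hf0⟩ := yOf_surj g hg
    rw [if_pos hg, tsum_eq_single f0 ?_]
    · rw [if_pos hf0, forestWt_eq_prod_yOf, hf0]
    · intro f hf
      rw [if_neg]
      intro hc
      exact hf (yOf_inj (hc.trans hf0.symm))
  · rw [if_neg hg]
    have h0 : ∀ f : PForest k n, (if yOf f = g then forestWt p f else 0) = 0 := by
      intro f
      rw [if_neg]
      intro hc
      exact hg (hc ▸ ballot_yOf f)
    rw [tsum_congr h0, tsum_zero]

theorem perm_count (hk : 1 ≤ k) (hkn : k ≤ n) (x : Fin n → ℕ) (hx : ∑ i, x i = n - k) :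
    (Finset.univ.filter fun σ : Equiv.Perm (Fin n) =>
      Ballot k (List.ofFn fun i => x (σ i))).card * n = n.factorial * k := by
  have hn : 0 < n := lt_of_lt_of_le hk hkn
  haveI : NeZero n := ⟨by omega⟩
  have key : ∀ σ : Equiv.Perm (Fin n),
      ∑ c : Fin n, (if Ballot k (List.ofFn fun i => x (σ (i + c))) then 1 else 0 : ℕ) = k := by
    intro σ
    rw [Finset.sum_boole, Nat.cast_id]
    exact cycle_count n k hn hk hkn (fun i => x (σ i))
      (by rw [Equiv.sum_comp σ x]; exact hx)
  have key2 : ∀ c : Fin n,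
      (∑ σ : Equiv.Perm (Fin n),
        (if Ballot k (List.ofFn fun i => x (σ (i + c))) then 1 else 0 : ℕ))
      = ∑ σ : Equiv.Perm (Fin n),
        (if Ballot k (List.ofFn fun i => x (σ i)) then 1 else 0 : ℕ) := by
    intro c
    exact Equiv.sum_comp (Equiv.mulRight ((Equiv.addRight c) : Equiv.Perm (Fin n)))
      (fun σ => if Ballot k (List.ofFn fun i => x (σ i)) then 1 else 0)
  have h1 : ∑ σ : Equiv.Perm (Fin n), ∑ c : Fin n,
      (if Ballot k (List.ofFn fun i => x (σ (i + c))) then 1 else 0 : ℕ)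
      = n.factorial * k := by
    rw [Finset.sum_congr rfl fun σ _ => key σ, Finset.sum_const, Finset.card_univ,
      Fintype.card_perm, Fintype.card_fin, smul_eq_mul]
  have h2 : ∑ σ : Equiv.Perm (Fin n), ∑ c : Fin n,
      (if Ballot k (List.ofFn fun i => x (σ (i + c))) then 1 else 0 : ℕ)
      = (Finset.univ.filter fun σ : Equiv.Perm (Fin n) =>
          Ballot k (List.ofFn fun i => x (σ i))).card * n := by
    rw [Finset.sum_comm, Finset.sum_congr rfl fun c _ => key2 c, Finset.sum_const,
      Finset.card_univ, Fintype.card_fin, smul_eq_mul]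
    rw [Finset.sum_boole, Nat.cast_id]
    ring
  rw [← h2, h1]

end Glue

section Dwass
variable {k n : ℕ}

theorem tsum_ballot_eq (p : PMF ℕ) :
    ∑' y : {y : Fin n → ℕ // Ballot k (List.ofFn y)}, ∏ i, p (y.1 i)
      = ∑' y : Fin n → ℕ, (if Ballot k (List.ofFn y) then ∏ i, p (y i) else 0) := by
  have h := tsum_subtype {y : Fin n → ℕ | Ballot k (List.ofFn y)} (fun y => ∏ i, p (y i))
  exact h.trans (tsum_congr fun y => by rw [Set.indicator_apply]; exact if_congr Iff.rfl rfl rfl)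

theorem tsum_sumcond_eq (p : PMF ℕ) :
    ∑' y : {y : Fin n → ℕ // ∑ i, y i = n - k}, ∏ i, p (y.1 i)
      = ∑' y : Fin n → ℕ, (if ∑ i, y i = n - k then ∏ i, p (y i) else 0) := by
  have h := tsum_subtype {y : Fin n → ℕ | ∑ i, y i = n - k} (fun y => ∏ i, p (y i))
  exact h.trans (tsum_congr fun y => by rw [Set.indicator_apply]; exact if_congr Iff.rfl rfl rfl)

theorem forest_tsum_eq (p : PMF ℕ) :
    ∑' f : PForest k n, forestWt p f
      = ∑' y : Fin n → ℕ, (if Ballot k (List.ofFn y) then ∏ i, p (y i) else 0) := by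
  rw [← tsum_ballot_eq]
  let e : PForest k n ≃ {y : Fin n → ℕ // Ballot k (List.ofFn y)} :=
    Equiv.ofBijective (fun f => ⟨yOf f, ballot_yOf f⟩)
      ⟨fun a b h => yOf_inj (congrArg Subtype.val h),
       fun y => (yOf_surj y.1 y.2).imp fun f hf => Subtype.ext hf⟩
  rw [← Equiv.tsum_eq e (fun y => ∏ i, p (y.1 i))]
  exact tsum_congr fun f => forestWt_eq_prod_yOf p f

theorem dwass (p : PMF ℕ) (hk : 1 ≤ k) (hkn : k ≤ n) :
    (n : ℝ≥0∞) * (∑' f : PForest k n, forestWt p f)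
      = (k : ℝ≥0∞) * ∑' x : {x : Fin n → ℕ // ∑ i, x i = n - k}, ∏ i, p (x.1 i) := by
  have hn : 0 < n := lt_of_lt_of_le hk hkn
  haveI : NeZero n := ⟨by omega⟩
  rw [forest_tsum_eq p, tsum_sumcond_eq p]
  conv_rhs => rw [← ENNReal.tsum_mul_left]
  have hpoint : ∀ y : Fin n → ℕ,
      (k : ℝ≥0∞) * (if ∑ i, y i = n - k then ∏ i, p (y i) else 0)
        = ∑ c : Fin n, (if Ballot k (List.ofFn fun i => y (i + c))
            then ∏ i, p (y (i + c)) else 0) := by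
    intro y
    by_cases hy : ∑ i, y i = n - k
    · rw [if_pos hy]
      have hc := cycle_count n k hn hk hkn y hy
      have h1 : (∑ c : Fin n, if Ballot k (List.ofFn fun i => y (i + c))
          then (1:ℝ≥0∞) else 0) = (k : ℝ≥0∞) := by
        rw [Finset.sum_boole, hc]
      rw [← h1, Finset.sum_mul]
      refine Finset.sum_congr rfl fun c _ => ?_
      rw [ite_mul, one_mul, zero_mul]
      have h2 : ∏ i, p (y (i + c)) = ∏ i, p (y i) :=
        Equiv.prod_comp (Equiv.addRight c) (fun j => p (y j))
      rw [h2]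
    · rw [if_neg hy, mul_zero]
      symm
      refine Finset.sum_eq_zero fun c _ => if_neg fun hb => hy ?_
      have h3 := ballot_sum _ hb
      have h4 : ∑ i : Fin n, y (i + c) = ∑ i, y i := Equiv.sum_comp (Equiv.addRight c) y
      exact h4.symm.trans h3
  conv_rhs => rw [tsum_congr hpoint]
  rw [Summable.tsum_finsetSum (fun c _ => ENNReal.summable)]
  have hrot : ∀ c : Fin n,
      (∑' y : Fin n → ℕ, (if Ballot k (List.ofFn fun i => y (i + c))
          then ∏ i, p (y (i + c)) else 0))
      = ∑' y : Fin n → ℕ, (if Ballot k (List.ofFn y) then ∏ i, p (y i) else 0) := by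
    intro c
    exact Equiv.tsum_eq ((Equiv.addRight c).arrowCongr (Equiv.refl ℕ)).symm
      (fun y => if Ballot k (List.ofFn y) then ∏ i, p (y i) else 0)
  rw [Finset.sum_congr rfl fun c _ => hrot c, Finset.sum_const, Finset.card_univ,
    Fintype.card_fin, nsmul_eq_mul]

end Dwass


/-- Under the law of a Galton–Watson forest with offspring law `p`, `k` trees,
conditioned to have total size `n` (an event of positive probability `Z`), the sequence of the
numbers of children of the `n` individuals listed in uniformly random order is distributed as
`n` i.i.d. variables of law `p` conditioned to have sum `n - k`.  Both conditional laws are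
written here in unnormalized form: for every candidate degree sequence `x : Fin n → ℕ`,
`(∑_σ P(forest of size n with permuted degree sequence x)) · P(S n = n - k)`
`= n! · Z · (∏ i, p (x i)) · 1_{∑ x = n - k}`. -/
theorem conditioned_gw_children_exchangeable
    (p : PMF ℕ) (k n : ℕ) (hk : 1 ≤ k) (hkn : k ≤ n)
    (Z : ℝ≥0∞) (hZ : Z = ∑' f : PForest k n, forestWt p f) (hZpos : 0 < Z)
    (W : ℝ≥0∞) (hW : W = ∑' x : {x : Fin n → ℕ // ∑ i, x i = n - k}, ∏ i, p (x.1 i))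
    (x : Fin n → ℕ) :
    (∑ σ : Equiv.Perm (Fin n), ∑' f : PForest k n,
        (if ∀ i : Fin n, (forestDegList f).getD (σ i) 0 = x i then forestWt p f else 0)) * W
      = (n.factorial : ℝ≥0∞) * Z *
        (if ∑ i, x i = n - k then ∏ i, p (x i) else 0) := by
  have hn : 0 < n := lt_of_lt_of_le hk hkn
  haveI : NeZero n := ⟨by omega⟩
  have hinner : ∀ σ : Equiv.Perm (Fin n),
      (∑' f : PForest k n,
        (if ∀ i : Fin n, (forestDegList f).getD (σ i) 0 = x i then forestWt p f else 0))
      = if Ballot k (List.ofFn fun j => x (σ⁻¹ j)) then ∏ i, p (x i) else 0 := by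
    intro σ
    have hcond : ∀ f : PForest k n,
        (∀ i : Fin n, (forestDegList f).getD (σ i) 0 = x i)
          ↔ yOf f = fun j => x (σ⁻¹ j) := by
      intro f
      constructor
      · intro h
        funext j
        have h1 := h (σ⁻¹ j)
        rw [show σ (σ⁻¹ j) = j from σ.apply_symm_apply j] at h1
        exact h1
      · intro h i
        have h1 := congrFun h (σ i)
        rw [show σ⁻¹ (σ i) = i from σ.symm_apply_apply i] at h1
        exact h1
    rw [tsum_congr fun f => if_congr (hcond f) rfl rfl, tsum_forest p _]
    exact if_congr Iff.rfl (Equiv.prod_comp σ⁻¹ fun j => p (x j)) rfl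
  rw [Finset.sum_congr rfl fun σ _ => hinner σ]
  by_cases hx : ∑ i, x i = n - k
  · rw [if_pos hx]
    have hsplit : ∀ σ : Equiv.Perm (Fin n),
        (if Ballot k (List.ofFn fun j => x (σ⁻¹ j)) then ∏ i, p (x i) else 0)
        = (if Ballot k (List.ofFn fun j => x (σ⁻¹ j)) then (1:ℝ≥0∞) else 0)
            * ∏ i, p (x i) := by
      intro σ
      split <;> simp
    rw [Finset.sum_congr rfl fun σ _ => hsplit σ, ← Finset.sum_mul]
    have hrei : (∑ σ : Equiv.Perm (Fin n),
        (if Ballot k (List.ofFn fun j => x (σ⁻¹ j)) then (1:ℝ≥0∞) else 0))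
        = ∑ σ : Equiv.Perm (Fin n),
          (if Ballot k (List.ofFn fun j => x (σ j)) then (1:ℝ≥0∞) else 0) :=
      Equiv.sum_comp (Equiv.inv (Equiv.Perm (Fin n)))
        (fun σ => if Ballot k (List.ofFn fun j => x (σ j)) then (1:ℝ≥0∞) else 0)
    rw [hrei, Finset.sum_boole]
    set A : ℕ := (Finset.univ.filter fun σ : Equiv.Perm (Fin n) =>
      Ballot k (List.ofFn fun j => x (σ j))).card with hA
    have hAn : A * n = n.factorial * k := perm_count hk hkn x hx
    have hD : (n : ℝ≥0∞) * Z = (k : ℝ≥0∞) * W := by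
      rw [hZ, hW]; exact dwass p hk hkn
    have hn0 : (n : ℝ≥0∞) ≠ 0 := by
      simp [hn.ne']
    have hnt : (n : ℝ≥0∞) ≠ ⊤ := ENNReal.natCast_ne_top n
    refine (ENNReal.mul_right_inj hn0 hnt).1 ?_
    have hAncast : (A : ℝ≥0∞) * (n : ℝ≥0∞) = (n.factorial : ℝ≥0∞) * (k : ℝ≥0∞) := by
      rw [← Nat.cast_mul, ← Nat.cast_mul, hAn]
    calc (n : ℝ≥0∞) * ((A : ℝ≥0∞) * (∏ i, p (x i)) * W)
        = ((A : ℝ≥0∞) * (n : ℝ≥0∞)) * ((∏ i, p (x i)) * W) := by ring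
      _ = ((n.factorial : ℝ≥0∞) * (k : ℝ≥0∞)) * ((∏ i, p (x i)) * W) := by rw [hAncast]
      _ = (n.factorial : ℝ≥0∞) * (∏ i, p (x i)) * ((k : ℝ≥0∞) * W) := by ring
      _ = (n.factorial : ℝ≥0∞) * (∏ i, p (x i)) * ((n : ℝ≥0∞) * Z) := by rw [hD]
      _ = (n : ℝ≥0∞) * ((n.factorial : ℝ≥0∞) * Z * ∏ i, p (x i)) := by ring
  · rw [if_neg hx]
    have hzero : ∀ σ : Equiv.Perm (Fin n),
        (if Ballot k (List.ofFn fun j => x (σ⁻¹ j)) then ∏ i, p (x i) else 0) = 0 := by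
      intro σ
      rw [if_neg]
      intro hb
      have h3 := ballot_sum _ hb
      have h4 : ∑ j : Fin n, x (σ⁻¹ j) = ∑ j, x j := Equiv.sum_comp σ⁻¹ x
      exact hx (h4.symm.trans h3)
    rw [Finset.sum_congr rfl fun σ _ => hzero σ]
    simp
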